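/- Let s ∈ (0,1), λ be an interior point of the dual cone K(√(1−s²)) (i.e., ⟪λ,r⟫ > √(1−s²)·‖λ‖, λ ≠ 0), and suppose x* maximizes x ↦ ∑ᵢλᵢFᵢ(x) over X. Then x* is K(s)-optimal: there is no x ∈ X with F(x) ≠ F(x*) and F(x) − F(x*) ∈ K(s). -/

import Mathlib

open Real

lemma aux_inner_pos {E : Type*} [NormedAddCommGroup E] [InnerProductSpace ℝ E]
    (r lam z : E) (hr : ‖r‖ = 1) (s : ℝ) (hs0 : 0 < s) (hs1 : s < 1) (hz : z ≠ 0)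
    (hlam : Real.sqrt (1 - s ^ 2) * ‖lam‖ < inner ℝ lam r)
    (hzr : s * ‖z‖ ≤ inner ℝ z r) : (0 : ℝ) < inner ℝ lam z := by
  set a : ℝ := inner ℝ lam r with ha
  set b : ℝ := inner ℝ z r with hb
  have hs2 : (0:ℝ) ≤ 1 - s ^ 2 := by nlinarith
  have hsq : (Real.sqrt (1 - s ^ 2)) ^ 2 = 1 - s ^ 2 := Real.sq_sqrt hs2
  have hsqnn : 0 ≤ Real.sqrt (1 - s ^ 2) := Real.sqrt_nonneg _
  have ha0 : 0 < a := lt_of_le_of_lt (by positivity) hlam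
  have hznorm : 0 < ‖z‖ := norm_pos_iff.mpr hz
  have hlnorm : 0 ≤ ‖lam‖ := norm_nonneg _
  have hb0 : 0 < b := lt_of_lt_of_le (by positivity) hzr
  have hrr : (inner ℝ r r : ℝ) = 1 := by
    rw [real_inner_self_eq_norm_sq, hr]; norm_num
  have hlamperp : ‖lam - a • r‖ ^ 2 = ‖lam‖ ^ 2 - a ^ 2 := by
    rw [norm_sub_sq_real, real_inner_smul_right, norm_smul, hr, mul_one, ← ha,
      Real.norm_eq_abs, sq_abs]
    ring
  have hzperp : ‖z - b • r‖ ^ 2 = ‖z‖ ^ 2 - b ^ 2 := by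
    rw [norm_sub_sq_real, real_inner_smul_right, norm_smul, hr, mul_one, ← hb,
      Real.norm_eq_abs, sq_abs]
    ring
  have hlb : ‖lam - a • r‖ ≤ s * ‖lam‖ := by
    have hsqlt : (Real.sqrt (1 - s ^ 2) * ‖lam‖) ^ 2 < a ^ 2 :=
      pow_lt_pow_left₀ hlam (by positivity) two_ne_zero
    have h1 : ‖lam - a • r‖ ^ 2 ≤ (s * ‖lam‖) ^ 2 := by nlinarith [hsqlt]
    have h2 := Real.sqrt_le_sqrt h1
    rwa [Real.sqrt_sq (norm_nonneg _), Real.sqrt_sq (by positivity)] at h2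
  have hzb : ‖z - b • r‖ ≤ Real.sqrt (1 - s ^ 2) * ‖z‖ := by
    have hsqle : (s * ‖z‖) ^ 2 ≤ b ^ 2 := pow_le_pow_left₀ (by positivity) hzr 2
    have h1 : ‖z - b • r‖ ^ 2 ≤ (Real.sqrt (1 - s ^ 2) * ‖z‖) ^ 2 := by nlinarith [hsqle]
    have h2 := Real.sqrt_le_sqrt h1
    rwa [Real.sqrt_sq (norm_nonneg _), Real.sqrt_sq (by positivity)] at h2
  have hinner : (inner ℝ (lam - a • r) (z - b • r) : ℝ) = inner ℝ lam z - a * b := by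
    simp only [inner_sub_left, inner_sub_right, real_inner_smul_left, real_inner_smul_right, hrr]
    have hcz : (inner ℝ r z : ℝ) = b := by rw [hb]; exact (real_inner_comm r z).symm
    have hcl : (inner ℝ lam r : ℝ) = a := ha.symm
    rw [hcz, hcl]
    ring
  have hcs : |(inner ℝ (lam - a • r) (z - b • r) : ℝ)| ≤ ‖lam - a • r‖ * ‖z - b • r‖ :=
    abs_real_inner_le_norm _ _
  have hcs' : -(‖lam - a • r‖ * ‖z - b • r‖) ≤ (inner ℝ lam z : ℝ) - a * b := by
    rw [← hinner]; exact (abs_le.mp hcs).1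
  have hprod : ‖lam - a • r‖ * ‖z - b • r‖ ≤ (s * ‖lam‖) * (Real.sqrt (1 - s ^ 2) * ‖z‖) :=
    mul_le_mul hlb hzb (norm_nonneg _) (by positivity)
  have hab : (s * ‖lam‖) * (Real.sqrt (1 - s ^ 2) * ‖z‖) < a * b := by
    have h1 : (Real.sqrt (1 - s ^ 2) * ‖lam‖) * (s * ‖z‖) < a * (s * ‖z‖) :=
      mul_lt_mul_of_pos_right hlam (by positivity)
    have h2 : a * (s * ‖z‖) ≤ a * b := mul_le_mul_of_nonneg_left hzr ha0.le
    have heq : (s * ‖lam‖) * (Real.sqrt (1 - s ^ 2) * ‖z‖)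
        = (Real.sqrt (1 - s ^ 2) * ‖lam‖) * (s * ‖z‖) := by ring
    rw [heq]; exact h1.trans_le h2
  linarith

theorem stmt14 (n : ℕ) (hn : 1 ≤ n) (s : ℝ) (hs : s ∈ Set.Ioo (0 : ℝ) 1)
    {X : Type*} (F : X → EuclideanSpace ℝ (Fin n)) (xs : X)
    (lam : EuclideanSpace ℝ (Fin n)) (hlam0 : lam ≠ 0)
    (hlam : Real.sqrt (1 - s ^ 2) * ‖lam‖ <
        inner ℝ lam ((WithLp.toLp 2 (fun _ => 1 / Real.sqrt n) : EuclideanSpace ℝ (Fin n))))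
    (hmax : ∀ x : X, ∑ i, lam i * F x i ≤ ∑ i, lam i * F xs i) :
    ¬ ∃ x : X, F x ≠ F xs ∧ F x - F xs ∈
      {z : EuclideanSpace ℝ (Fin n) |
        s * ‖z‖ ≤ inner ℝ z ((WithLp.toLp 2 (fun _ => 1 / Real.sqrt n) : EuclideanSpace ℝ (Fin n)))} := by
  rintro ⟨x, hne, hmem⟩
  set r : EuclideanSpace ℝ (Fin n) := (WithLp.toLp 2 (fun _ => 1 / Real.sqrt n) : EuclideanSpace ℝ (Fin n)) with hrdef
  have hn0 : (0:ℝ) < n := by exact_mod_cast hn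
  have hr : ‖r‖ = 1 := by
    rw [EuclideanSpace.norm_eq]
    have : ∑ i : Fin n, ‖r i‖ ^ 2 = 1 := by
      simp [hrdef, Finset.sum_const, div_pow, Real.sq_sqrt hn0.le, abs_of_nonneg,
        one_div, Finset.card_univ]
      field_simp
    rw [this, Real.sqrt_one]
  set z : EuclideanSpace ℝ (Fin n) := F x - F xs with hzdef
  have hz : z ≠ 0 := sub_ne_zero.mpr hne
  have hpos : (0:ℝ) < inner ℝ lam z :=
    aux_inner_pos r lam z hr s hs.1 hs.2 hz hlam hmem
  have hinner : (inner ℝ lam z : ℝ) = ∑ i, lam i * F x i - ∑ i, lam i * F xs i := by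
    simp [hzdef, PiLp.inner_apply, RCLike.inner_apply, ← Finset.sum_sub_distrib, mul_sub]
    exact Finset.sum_congr rfl (fun i _ => by ring)
  have := hmax x
  rw [hinner] at hpos
  linarith
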